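/- Let ((Ψ_i)_i,(Y_i,z_i)_i) be a feasible solution of the affinely restricted problem P_AT. Defining the stagewise map R_j(s_j) := Y_j s_j + z_j and the policies Γ_{i,t}(ξ_i^{t−1}, s_{N_i}^t) := Ψ_{i,t}(ξ_i^{t−1}, [R_j(s_j)^t]_{j∈N_i}), the solution ((Γ_i)_i,(Y_i,z_i)_i) is feasible for the auxiliary-uncertainty problem P_S and attains the same objective value. Combining with the converse construction (substituting L_j = R_j^{−1}), the two problems are equivalent and val(P_AT) = val(P_S). -/
import Mathlib


open scoped BigOperators

/-- The `q`-norm used in the cost: `q = 1` (when `qOne = true`) gives the sum of absolute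
values, `q = ∞` (when `qOne = false`) gives the sup norm. -/
noncomputable def normQ (qOne : Bool) {n : ℕ} (v : Fin n → ℝ) : ℝ :=
  if qOne then ∑ k, |v k| else ‖v‖

/-- The data of a network of `M` interconnected linear systems over `T` stages:
dynamics matrices, operational constraints, costs, polyhedral uncertainty sets (nonempty and
compact), the neighbour sets `Nbr` and the precedent sets `Nbar` (characterized as the
smallest family containing each agent and nested along the neighbour relation). -/
structure Sys where
  M : ℕ
  T : ℕ
  hM : 1 ≤ M
  hT : 1 ≤ T
  nx : Fin M → ℕ
  nu : Fin M → ℕ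
  nξ : Fin M → ℕ
  xinit : ∀ i : Fin M, Fin (nx i) → ℝ
  Nbr : Fin M → Finset (Fin M)
  Nbar : Fin M → Finset (Fin M)
  Nbar_self : ∀ i, i ∈ Nbar i
  Nbar_nested : ∀ i, ∀ j ∈ Nbr i, Nbar j ⊆ Nbar i
  Nbar_min : ∀ P : Fin M → Finset (Fin M),
    (∀ i, i ∈ P i) → (∀ i, ∀ j ∈ Nbr i, P j ⊆ P i) → ∀ i, Nbar i ⊆ P i
  A : ∀ i : Fin M, Fin T → Matrix (Fin (nx i)) (Fin (nx i)) ℝ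
  B : ∀ i : Fin M, Fin T → ∀ j : Fin M, Matrix (Fin (nx i)) (Fin (nx j)) ℝ
  D : ∀ i : Fin M, Fin T → Matrix (Fin (nx i)) (Fin (nu i)) ℝ
  E : ∀ i : Fin M, Fin T → Matrix (Fin (nx i)) (Fin (nξ i)) ℝ
  nc : Fin M → ℕ
  Hx : ∀ i : Fin M, Matrix (Fin (nc i)) (Fin (T+1) × Fin (nx i)) ℝ
  Hu : ∀ i : Fin M, Matrix (Fin (nc i)) (Fin T × Fin (nu i)) ℝ
  hvec : ∀ i : Fin M, Fin (nc i) → ℝ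
  qOne : Bool
  nq : Fin M → ℕ
  nr : Fin M → ℕ
  Q : ∀ i : Fin M, Matrix (Fin (nq i)) (Fin (nx i)) ℝ
  R : ∀ i : Fin M, Matrix (Fin (nr i)) (Fin (nu i)) ℝ
  nW : Fin M → ℕ
  W : ∀ i : Fin M, Matrix (Fin (nW i)) (Fin T × Fin (nξ i)) ℝ
  wvec : ∀ i : Fin M, Fin (nW i) → ℝ
  Xi_nonempty : ∀ i : Fin M,
    {ξ : Fin T → Fin (nξ i) → ℝ |
      ∀ r, wvec i r ≤ ∑ p : Fin T × Fin (nξ i), W i r p * ξ p.1 p.2}.Nonempty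
  Xi_compact : ∀ i : Fin M,
    IsCompact {ξ : Fin T → Fin (nξ i) → ℝ |
      ∀ r, wvec i r ≤ ∑ p : Fin T × Fin (nξ i), W i r p * ξ p.1 p.2}

namespace Sys

variable (S : Sys)

/-- State trajectories of agent `i` (stages `1, …, T+1`, zero-indexed). -/
abbrev StateTraj (i : Fin S.M) := Fin (S.T+1) → Fin (S.nx i) → ℝ

/-- Input trajectories of agent `i`. -/
abbrev InputTraj (i : Fin S.M) := Fin S.T → Fin (S.nu i) → ℝ

/-- Uncertainty trajectories of agent `i`. -/
abbrev NoiseTraj (i : Fin S.M) := Fin S.T → Fin (S.nξ i) → ℝ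

/-- Families of (belief) state trajectories, one for each agent. -/
abbrev Beliefs := ∀ j : Fin S.M, Fin (S.T+1) → Fin (S.nx j) → ℝ

/-- Joint uncertainty trajectories. -/
abbrev NoiseAll := ∀ j : Fin S.M, S.NoiseTraj j

/-- The polyhedral uncertainty set `Ξ_i = {ξ : W_i ξ ≥ w_i}`. -/
def Xi (i : Fin S.M) : Set (S.NoiseTraj i) :=
  {ξ | ∀ r, S.wvec i r ≤ ∑ p : Fin S.T × Fin (S.nξ i), S.W i r p * ξ p.1 p.2}

/-- The joint uncertainty set `Ξ_M = ∏_i Ξ_i`. -/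
def XiM : Set S.NoiseAll := {ξ | ∀ j, ξ j ∈ S.Xi j}

/-- The operational constraint set `O_i`: `H_{x,i} x_i + H_{u,i} u_i ≤ h_i`. -/
def InO (i : Fin S.M) (x : S.StateTraj i) (u : S.InputTraj i) : Prop :=
  ∀ r, (∑ p : Fin (S.T+1) × Fin (S.nx i), S.Hx i r p * x p.1 p.2)
      + (∑ p : Fin S.T × Fin (S.nu i), S.Hu i r p * u p.1 p.2) ≤ S.hvec i r

/-- The cost `J_i(x_i, u_i) = ∑_{t=1}^T (‖Q_i x_{i,t}‖_q + ‖R_i u_{i,t}‖_q)`. -/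
noncomputable def cost (i : Fin S.M) (x : S.StateTraj i) (u : S.InputTraj i) : ℝ :=
  ∑ t : Fin S.T,
    (normQ S.qOne ((S.Q i).mulVec (x t.castSucc)) + normQ S.qOne ((S.R i).mulVec (u t)))

/-- Closed-loop joint dynamics: state of each agent at (zero-based) time `t`,
given inputs `u` and uncertainties `ξ`. -/
noncomputable def jointAux (u : ∀ i : Fin S.M, S.InputTraj i) (ξ : S.NoiseAll) :
    ℕ → ∀ i : Fin S.M, Fin (S.nx i) → ℝ
  | 0 => fun i => S.xinit i
  | (t+1) => fun i =>
      if h : t < S.T then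
        (S.A i ⟨t, h⟩).mulVec (jointAux u ξ t i)
        + ∑ j ∈ S.Nbr i, (S.B i ⟨t, h⟩ j).mulVec (jointAux u ξ t j)
        + (S.D i ⟨t, h⟩).mulVec (u i ⟨t, h⟩)
        + (S.E i ⟨t, h⟩).mulVec (ξ i ⟨t, h⟩)
      else 0

/-- Policies with access to the full uncertainty history (centralized /
partially nested information, depending on the causality requirement imposed). -/
abbrev CPolicy := ∀ i : Fin S.M, Fin S.T → S.NoiseAll → Fin (S.nu i) → ℝ

/-- Closed-loop inputs of a centralized/partially nested policy. -/
noncomputable def clInput (Φ : S.CPolicy) (ξ : S.NoiseAll) (i : Fin S.M) : S.InputTraj i :=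
  fun t => Φ i t ξ

/-- Closed-loop state trajectories of a centralized/partially nested policy. -/
noncomputable def clState (Φ : S.CPolicy) (ξ : S.NoiseAll) (i : Fin S.M) : S.StateTraj i :=
  fun τ => S.jointAux (fun i' t => Φ i' t ξ) ξ τ.val i

/-- Strict causality: `Φ_{i,t}` is a function of `ξ_M^{t-1}` only. -/
def CCausal (Φ : S.CPolicy) : Prop :=
  ∀ i (t : Fin S.T) (ξ ξ' : S.NoiseAll),
    (∀ j : Fin S.M, ∀ τ : Fin S.T, (τ : ℕ) < (t : ℕ) → ξ j τ = ξ' j τ) →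
    Φ i t ξ = Φ i t ξ'

/-- Partially nested causality: `Φ_{i,t}` is a function of `ξ_{N̄_i}^{t-1}` only. -/
def PNCausal (Φ : S.CPolicy) : Prop :=
  ∀ i (t : Fin S.T) (ξ ξ' : S.NoiseAll),
    (∀ j ∈ S.Nbar i, ∀ τ : Fin S.T, (τ : ℕ) < (t : ℕ) → ξ j τ = ξ' j τ) →
    Φ i t ξ = Φ i t ξ'

/-- Robust feasibility of the closed loop: operational constraints hold for every
`ξ_M ∈ Ξ_M`. -/
def feasRobust (Φ : S.CPolicy) : Prop :=
  ∀ ξ ∈ S.XiM, ∀ i, S.InO i (S.clState Φ ξ i) (S.clInput Φ ξ i)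

/-- Feasibility for the centralized problem `P_C`. -/
def feasC (Φ : S.CPolicy) : Prop := S.CCausal Φ ∧ S.feasRobust Φ

/-- Feasibility for the partially nested problem `P_PN`. -/
def feasPN (Φ : S.CPolicy) : Prop := S.PNCausal Φ ∧ S.feasRobust Φ

/-- Objective of `P_C`: `∑_i sup_{ξ_M ∈ Ξ_M} J_i`. -/
noncomputable def objC (Φ : S.CPolicy) : EReal :=
  ∑ i : Fin S.M,
    sSup ((fun ξ => ((S.cost i (S.clState Φ ξ i) (S.clInput Φ ξ i) : ℝ) : EReal)) '' S.XiM)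

/-- Objective of `P_PN`: `∑_i sup_{ξ_{N̄_i} ∈ Ξ_{N̄_i}} J_i`, the supremum over
`Ξ_{N̄_i}` being encoded by pinning the coordinates outside `N̄_i` to a fixed
selection `ξ0 ∈ Ξ_M`. -/
noncomputable def objPN (Φ : S.CPolicy) (ξ0 : S.NoiseAll) : EReal :=
  ∑ i : Fin S.M,
    sSup ((fun ξ => ((S.cost i (S.clState Φ ξ i) (S.clInput Φ ξ i) : ℝ) : EReal)) ''
      {ξ | ξ ∈ S.XiM ∧ ∀ j ∉ S.Nbar i, ξ j = ξ0 j})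

/-- Optimal value of the centralized problem `P_C`. -/
noncomputable def valC : EReal := sInf {v : EReal | ∃ Φ : S.CPolicy, S.feasC Φ ∧ v = S.objC Φ}

/-- Optimal value of the partially nested problem `P_PN`. -/
noncomputable def valPN (ξ0 : S.NoiseAll) : EReal :=
  sInf {v : EReal | ∃ Φ : S.CPolicy, S.feasPN Φ ∧ v = S.objPN Φ ξ0}

end Sys
namespace Sys

variable (S : Sys)

/-- Policies of the local information exchange problem: `Ψ_{i,t}` sees the own
uncertainty trajectory and the neighbours' belief trajectories. -/
abbrev LPolicy := ∀ i : Fin S.M, Fin S.T → S.NoiseTraj i → S.Beliefs → Fin (S.nu i) → ℝ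

/-- Causality for local policies: `Ψ_{i,t}` depends only on `ξ_i^{t-1}` and
`ζ_{N_i}^t`. -/
def LCausal (Ψ : S.LPolicy) : Prop :=
  ∀ i (t : Fin S.T) (ξ ξ' : S.NoiseTraj i) (ζ ζ' : S.Beliefs),
    (∀ τ : Fin S.T, (τ : ℕ) < (t : ℕ) → ξ τ = ξ' τ) →
    (∀ j ∈ S.Nbr i, ∀ τ : Fin (S.T+1), (τ : ℕ) ≤ (t : ℕ) → ζ j τ = ζ' j τ) →
    Ψ i t ξ ζ = Ψ i t ξ' ζ'

/-- The dynamics `f_i`: state of agent `i` at (zero-based) time `t`, driven by the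
neighbour (belief) trajectories `ζ`, inputs `u` and uncertainties `ξ`. -/
noncomputable def trajAux (i : Fin S.M) (ζ : S.Beliefs) (u : S.InputTraj i)
    (ξ : S.NoiseTraj i) : ℕ → Fin (S.nx i) → ℝ
  | 0 => S.xinit i
  | (t+1) =>
      if h : t < S.T then
        (S.A i ⟨t, h⟩).mulVec (trajAux i ζ u ξ t)
        + ∑ j ∈ S.Nbr i, (S.B i ⟨t, h⟩ j).mulVec (ζ j ⟨t, Nat.lt_succ_of_lt h⟩)
        + (S.D i ⟨t, h⟩).mulVec (u ⟨t, h⟩)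
        + (S.E i ⟨t, h⟩).mulVec (ξ ⟨t, h⟩)
      else 0

/-- The state trajectory `f_i(ζ_{N_i}, u_i, ξ_i)`. -/
noncomputable def traj (i : Fin S.M) (ζ : S.Beliefs) (u : S.InputTraj i)
    (ξ : S.NoiseTraj i) : S.StateTraj i := fun τ => S.trajAux i ζ u ξ τ.val

/-- Closed-loop inputs of a local policy. -/
noncomputable def lInput (Ψ : S.LPolicy) (i : Fin S.M) (ξ : S.NoiseTraj i) (ζ : S.Beliefs) :
    S.InputTraj i := fun t => Ψ i t ξ ζ

/-- Closed-loop state of a local policy. -/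
noncomputable def lState (Ψ : S.LPolicy) (i : Fin S.M) (ξ : S.NoiseTraj i) (ζ : S.Beliefs) :
    S.StateTraj i := S.traj i ζ (S.lInput Ψ i ξ ζ) ξ

/-- The belief constraint set `X_{N_i} = ∏_{j ∈ N_i} X_j` (coordinates outside `N_i`
are unconstrained; they are irrelevant by causality). -/
def BelSet (X : ∀ i : Fin S.M, Set (S.StateTraj i)) (i : Fin S.M) : Set S.Beliefs :=
  {ζ | ∀ j ∈ S.Nbr i, ζ j ∈ X j}

/-- Robust constraints of the local problem: for every belief in `X_{N_i}` and every
`ξ_i ∈ Ξ_i`, the operational constraints hold and the own state lies in `X_i`. -/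
def feasLcon (Ψ : S.LPolicy) (X : ∀ i : Fin S.M, Set (S.StateTraj i)) : Prop :=
  ∀ i, ∀ ζ ∈ S.BelSet X i, ∀ ξ ∈ S.Xi i,
    S.InO i (S.lState Ψ i ξ ζ) (S.lInput Ψ i ξ ζ) ∧ S.lState Ψ i ξ ζ ∈ X i

/-- Feasibility for the local problem `P_L`: causal policies, nonempty compact
state-forecast sets, and robust constraints. -/
def feasL (Ψ : S.LPolicy) (X : ∀ i : Fin S.M, Set (S.StateTraj i)) : Prop :=
  S.LCausal Ψ ∧ (∀ i, (X i).Nonempty ∧ IsCompact (X i)) ∧ S.feasLcon Ψ X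

/-- Objective of `P_L`: `∑_i sup_{ξ_i ∈ Ξ_i, ζ_{N_i} ∈ X_{N_i}} J_i`. -/
noncomputable def objL (Ψ : S.LPolicy) (X : ∀ i : Fin S.M, Set (S.StateTraj i)) : EReal :=
  ∑ i : Fin S.M,
    sSup ((fun p : S.NoiseTraj i × S.Beliefs =>
        ((S.cost i (S.lState Ψ i p.1 p.2) (S.lInput Ψ i p.1 p.2) : ℝ) : EReal)) ''
      {p | p.1 ∈ S.Xi i ∧ p.2 ∈ S.BelSet X i})

/-- Optimal value of the local problem `P_L`. -/
noncomputable def valL : EReal :=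
  sInf {v : EReal | ∃ (Ψ : S.LPolicy) (X : ∀ i : Fin S.M, Set (S.StateTraj i)),
    S.feasL Ψ X ∧ v = S.objL Ψ X}

end Sys
namespace Sys

variable (S : Sys)

/-- The fixed primitive set `S_i = {s : g_i − G_i s ∈ K_i}` (as a set of state
trajectories of agent `i`). -/
def SsetOf (ℓ : Fin S.M → ℕ) (K : ∀ i : Fin S.M, Set (Fin (ℓ i) → ℝ))
    (G : ∀ i : Fin S.M, Matrix (Fin (ℓ i)) (Fin (S.T+1) × Fin (S.nx i)) ℝ)
    (g : ∀ i : Fin S.M, Fin (ℓ i) → ℝ) (i : Fin S.M) : Set (S.StateTraj i) :=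
  {s | (fun r => g i r - ∑ p : Fin (S.T+1) × Fin (S.nx i), G i r p * s p.1 p.2) ∈ K i}

/-- The affinely transformed state-forecast set
`X_i(Y_i, z_i) = {Y_i s + z_i : s ∈ S_i}` with block-diagonal (stagewise) `Y_i`. -/
def XAT (ℓ : Fin S.M → ℕ) (K : ∀ i : Fin S.M, Set (Fin (ℓ i) → ℝ))
    (G : ∀ i : Fin S.M, Matrix (Fin (ℓ i)) (Fin (S.T+1) × Fin (S.nx i)) ℝ)
    (g : ∀ i : Fin S.M, Fin (ℓ i) → ℝ)
    (Y : ∀ i : Fin S.M, Fin (S.T+1) → Matrix (Fin (S.nx i)) (Fin (S.nx i)) ℝ)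
    (z : ∀ i : Fin S.M, S.StateTraj i) (i : Fin S.M) : Set (S.StateTraj i) :=
  {x | ∃ s ∈ S.SsetOf ℓ K G g i, ∀ t, x t = (Y i t).mulVec (s t) + z i t}

/-- Feasibility for the affinely restricted problem `P_AT`: causal local policies,
positive definite stage blocks `Y_{i,t}`, and the robust constraints of `P_L` with the
state-forecast sets `X_i(Y_i, z_i)`. -/
def feasAT (ℓ : Fin S.M → ℕ) (K : ∀ i : Fin S.M, Set (Fin (ℓ i) → ℝ))
    (G : ∀ i : Fin S.M, Matrix (Fin (ℓ i)) (Fin (S.T+1) × Fin (S.nx i)) ℝ)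
    (g : ∀ i : Fin S.M, Fin (ℓ i) → ℝ)
    (Y : ∀ i : Fin S.M, Fin (S.T+1) → Matrix (Fin (S.nx i)) (Fin (S.nx i)) ℝ)
    (z : ∀ i : Fin S.M, S.StateTraj i) (Ψ : S.LPolicy) : Prop :=
  S.LCausal Ψ ∧ (∀ i t, (Y i t).PosDef) ∧ S.feasLcon Ψ (fun i => S.XAT ℓ K G g Y z i)

/-- Optimal value of `P_AT`. -/
noncomputable def valAT (ℓ : Fin S.M → ℕ) (K : ∀ i : Fin S.M, Set (Fin (ℓ i) → ℝ))
    (G : ∀ i : Fin S.M, Matrix (Fin (ℓ i)) (Fin (S.T+1) × Fin (S.nx i)) ℝ)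
    (g : ∀ i : Fin S.M, Fin (ℓ i) → ℝ) : EReal :=
  sInf {v : EReal | ∃ (Ψ : S.LPolicy)
    (Y : ∀ i : Fin S.M, Fin (S.T+1) → Matrix (Fin (S.nx i)) (Fin (S.nx i)) ℝ)
    (z : ∀ i : Fin S.M, S.StateTraj i),
    S.feasAT ℓ K G g Y z Ψ ∧ v = S.objL Ψ (fun i => S.XAT ℓ K G g Y z i)}

/-- The stagewise affine map `R_j(s_j) = Y_j s_j + z_j`. -/
noncomputable def Rmap (Y : ∀ i : Fin S.M, Fin (S.T+1) → Matrix (Fin (S.nx i)) (Fin (S.nx i)) ℝ)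
    (z : ∀ i : Fin S.M, S.StateTraj i) (j : Fin S.M) (s : S.StateTraj j) : S.StateTraj j :=
  fun t => (Y j t).mulVec (s t) + z j t

/-- The stagewise inverse map `L_j(ζ_j) = Y_j⁻¹ (ζ_j − z_j)`. -/
noncomputable def Lmap (Y : ∀ i : Fin S.M, Fin (S.T+1) → Matrix (Fin (S.nx i)) (Fin (S.nx i)) ℝ)
    (z : ∀ i : Fin S.M, S.StateTraj i) (j : Fin S.M) (ζ : S.StateTraj j) : S.StateTraj j :=
  fun t => (Y j t)⁻¹.mulVec (ζ t - z j t)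

/-- The auxiliary-uncertainty constraint set `S_{N_i} = ∏_{j ∈ N_i} S_j`. -/
def SBelSet (ℓ : Fin S.M → ℕ) (K : ∀ i : Fin S.M, Set (Fin (ℓ i) → ℝ))
    (G : ∀ i : Fin S.M, Matrix (Fin (ℓ i)) (Fin (S.T+1) × Fin (S.nx i)) ℝ)
    (g : ∀ i : Fin S.M, Fin (ℓ i) → ℝ) (i : Fin S.M) : Set S.Beliefs :=
  {s | ∀ j ∈ S.Nbr i, s j ∈ S.SsetOf ℓ K G g j}

/-- Closed-loop state in the auxiliary-uncertainty problem `P_S`: the beliefs are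
`ζ_j = Y_j s_j + z_j` and the inputs are `Γ_{i,t}(ξ_i^{t-1}, s_{N_i}^t)`. -/
noncomputable def psState
    (Y : ∀ i : Fin S.M, Fin (S.T+1) → Matrix (Fin (S.nx i)) (Fin (S.nx i)) ℝ)
    (z : ∀ i : Fin S.M, S.StateTraj i) (Γ : S.LPolicy) (i : Fin S.M)
    (ξ : S.NoiseTraj i) (s : S.Beliefs) : S.StateTraj i :=
  S.traj i (fun j => S.Rmap Y z j (s j)) (fun t => Γ i t ξ s) ξ

/-- Feasibility for the auxiliary-uncertainty problem `P_S`. -/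
def feasPS (ℓ : Fin S.M → ℕ) (K : ∀ i : Fin S.M, Set (Fin (ℓ i) → ℝ))
    (G : ∀ i : Fin S.M, Matrix (Fin (ℓ i)) (Fin (S.T+1) × Fin (S.nx i)) ℝ)
    (g : ∀ i : Fin S.M, Fin (ℓ i) → ℝ)
    (Y : ∀ i : Fin S.M, Fin (S.T+1) → Matrix (Fin (S.nx i)) (Fin (S.nx i)) ℝ)
    (z : ∀ i : Fin S.M, S.StateTraj i) (Γ : S.LPolicy) : Prop :=
  S.LCausal Γ ∧ (∀ i t, (Y i t).PosDef) ∧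
  ∀ i, ∀ s ∈ S.SBelSet ℓ K G g i, ∀ ξ ∈ S.Xi i,
    S.InO i (S.psState Y z Γ i ξ s) (fun t => Γ i t ξ s) ∧
    S.psState Y z Γ i ξ s ∈ S.XAT ℓ K G g Y z i

/-- Objective of `P_S`: `∑_i sup_{ξ_i ∈ Ξ_i, s_{N_i} ∈ S_{N_i}} J_i`. -/
noncomputable def objPS (ℓ : Fin S.M → ℕ) (K : ∀ i : Fin S.M, Set (Fin (ℓ i) → ℝ))
    (G : ∀ i : Fin S.M, Matrix (Fin (ℓ i)) (Fin (S.T+1) × Fin (S.nx i)) ℝ)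
    (g : ∀ i : Fin S.M, Fin (ℓ i) → ℝ)
    (Y : ∀ i : Fin S.M, Fin (S.T+1) → Matrix (Fin (S.nx i)) (Fin (S.nx i)) ℝ)
    (z : ∀ i : Fin S.M, S.StateTraj i) (Γ : S.LPolicy) : EReal :=
  ∑ i : Fin S.M,
    sSup ((fun p : S.NoiseTraj i × S.Beliefs =>
        ((S.cost i (S.psState Y z Γ i p.1 p.2) (fun t => Γ i t p.1 p.2) : ℝ) : EReal)) ''
      {p | p.1 ∈ S.Xi i ∧ p.2 ∈ S.SBelSet ℓ K G g i})

/-- Optimal value of `P_S`. -/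
noncomputable def valPS (ℓ : Fin S.M → ℕ) (K : ∀ i : Fin S.M, Set (Fin (ℓ i) → ℝ))
    (G : ∀ i : Fin S.M, Matrix (Fin (ℓ i)) (Fin (S.T+1) × Fin (S.nx i)) ℝ)
    (g : ∀ i : Fin S.M, Fin (ℓ i) → ℝ) : EReal :=
  sInf {v : EReal | ∃ (Γ : S.LPolicy)
    (Y : ∀ i : Fin S.M, Fin (S.T+1) → Matrix (Fin (S.nx i)) (Fin (S.nx i)) ℝ)
    (z : ∀ i : Fin S.M, S.StateTraj i),
    S.feasPS ℓ K G g Y z Γ ∧ v = S.objPS ℓ K G g Y z Γ}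

end Sys


section Aux

variable (S : Sys)

lemma mulVec_nonsing_inv_cancel {n : ℕ} {Y : Matrix (Fin n) (Fin n) ℝ} (hY : Y.PosDef)
    (v : Fin n → ℝ) : Y.mulVec (Y⁻¹.mulVec v) = v := by
  rw [Matrix.mulVec_mulVec, Matrix.mul_nonsing_inv _ ((Matrix.isUnit_iff_isUnit_det _).1 hY.isUnit),
    Matrix.one_mulVec]

lemma nonsing_inv_mulVec_cancel {n : ℕ} {Y : Matrix (Fin n) (Fin n) ℝ} (hY : Y.PosDef)
    (v : Fin n → ℝ) : Y⁻¹.mulVec (Y.mulVec v) = v := by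
  rw [Matrix.mulVec_mulVec, Matrix.nonsing_inv_mul _ ((Matrix.isUnit_iff_isUnit_det _).1 hY.isUnit),
    Matrix.one_mulVec]

lemma Rmap_Lmap (Y : ∀ i : Fin S.M, Fin (S.T+1) → Matrix (Fin (S.nx i)) (Fin (S.nx i)) ℝ)
    (z : ∀ i : Fin S.M, S.StateTraj i) (hY : ∀ i t, (Y i t).PosDef) (j : Fin S.M)
    (ζ : S.StateTraj j) : S.Rmap Y z j (S.Lmap Y z j ζ) = ζ := by
  funext t
  simp only [Sys.Rmap, Sys.Lmap]
  rw [mulVec_nonsing_inv_cancel (hY j t), sub_add_cancel]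

lemma Lmap_Rmap (Y : ∀ i : Fin S.M, Fin (S.T+1) → Matrix (Fin (S.nx i)) (Fin (S.nx i)) ℝ)
    (z : ∀ i : Fin S.M, S.StateTraj i) (hY : ∀ i t, (Y i t).PosDef) (j : Fin S.M)
    (s : S.StateTraj j) : S.Lmap Y z j (S.Rmap Y z j s) = s := by
  funext t
  simp only [Sys.Rmap, Sys.Lmap]
  rw [add_sub_cancel_right, nonsing_inv_mulVec_cancel (hY j t)]

lemma mem_XAT_iff (ℓ : Fin S.M → ℕ) (K : ∀ i : Fin S.M, Set (Fin (ℓ i) → ℝ))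
    (G : ∀ i : Fin S.M, Matrix (Fin (ℓ i)) (Fin (S.T+1) × Fin (S.nx i)) ℝ)
    (g : ∀ i : Fin S.M, Fin (ℓ i) → ℝ)
    (Y : ∀ i : Fin S.M, Fin (S.T+1) → Matrix (Fin (S.nx i)) (Fin (S.nx i)) ℝ)
    (z : ∀ i : Fin S.M, S.StateTraj i) (hY : ∀ i t, (Y i t).PosDef) (j : Fin S.M)
    (ζ : S.StateTraj j) :
    ζ ∈ S.XAT ℓ K G g Y z j ↔ S.Lmap Y z j ζ ∈ S.SsetOf ℓ K G g j := by
  constructor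
  · rintro ⟨s, hs, hrep⟩
    have h : ζ = S.Rmap Y z j s := funext hrep
    rw [h, Lmap_Rmap S Y z hY]
    exact hs
  · intro h
    exact ⟨S.Lmap Y z j ζ, h, fun t => (congrFun (Rmap_Lmap S Y z hY j ζ) t).symm⟩

lemma Rmap_mem_XAT (ℓ : Fin S.M → ℕ) (K : ∀ i : Fin S.M, Set (Fin (ℓ i) → ℝ))
    (G : ∀ i : Fin S.M, Matrix (Fin (ℓ i)) (Fin (S.T+1) × Fin (S.nx i)) ℝ)
    (g : ∀ i : Fin S.M, Fin (ℓ i) → ℝ)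
    (Y : ∀ i : Fin S.M, Fin (S.T+1) → Matrix (Fin (S.nx i)) (Fin (S.nx i)) ℝ)
    (z : ∀ i : Fin S.M, S.StateTraj i) (j : Fin S.M) {s : S.StateTraj j}
    (hs : s ∈ S.SsetOf ℓ K G g j) : S.Rmap Y z j s ∈ S.XAT ℓ K G g Y z j :=
  ⟨s, hs, fun _ => rfl⟩

end Aux

/-- Let `((Ψ_i)_i, (Y_i, z_i)_i)` be a feasible solution of the
affinely restricted problem `P_AT`. With the stagewise maps `R_j(s_j) = Y_j s_j + z_j`
and the policies `Γ_{i,t}(ξ_i^{t-1}, s_{N_i}^t) := Ψ_{i,t}(ξ_i^{t-1}, [R_j(s_j)^t]_{j ∈ N_i})`,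
the solution `((Γ_i)_i, (Y_i, z_i)_i)` is feasible for the auxiliary-uncertainty
problem `P_S` and attains the same objective value; combining with the converse
construction, the two problems are equivalent and `val(P_AT) = val(P_S)`. -/
theorem affineRestriction_to_auxUncertainty (S : Sys)
    (ℓ : Fin S.M → ℕ) (K : ∀ i : Fin S.M, Set (Fin (ℓ i) → ℝ))
    (hKclosed : ∀ i, IsClosed (K i)) (hKconvex : ∀ i, Convex ℝ (K i))
    (hKadd : ∀ i, ∀ a ∈ K i, ∀ b ∈ K i, a + b ∈ K i)
    (hKsmul : ∀ i, ∀ c : ℝ, 0 ≤ c → ∀ a ∈ K i, c • a ∈ K i)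
    (G : ∀ i : Fin S.M, Matrix (Fin (ℓ i)) (Fin (S.T+1) × Fin (S.nx i)) ℝ)
    (g : ∀ i : Fin S.M, Fin (ℓ i) → ℝ)
    (hSne : ∀ i, (S.SsetOf ℓ K G g i).Nonempty)
    (hSconvex : ∀ i, Convex ℝ (S.SsetOf ℓ K G g i))
    (hScompact : ∀ i, IsCompact (S.SsetOf ℓ K G g i)) :
    (∀ (Ψ : S.LPolicy)
      (Y : ∀ i : Fin S.M, Fin (S.T+1) → Matrix (Fin (S.nx i)) (Fin (S.nx i)) ℝ)
      (z : ∀ i : Fin S.M, S.StateTraj i), S.feasAT ℓ K G g Y z Ψ →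
        S.feasPS ℓ K G g Y z (fun i t ξ s => Ψ i t ξ (fun j => S.Rmap Y z j (s j))) ∧
        S.objPS ℓ K G g Y z (fun i t ξ s => Ψ i t ξ (fun j => S.Rmap Y z j (s j)))
          = S.objL Ψ (fun i => S.XAT ℓ K G g Y z i)) ∧
    S.valAT ℓ K G g = S.valPS ℓ K G g := by
  -- Forward construction: from a feasible `P_AT` solution to a feasible `P_S` solution.
  have fwd : ∀ (Ψ : S.LPolicy)
      (Y : ∀ i : Fin S.M, Fin (S.T+1) → Matrix (Fin (S.nx i)) (Fin (S.nx i)) ℝ)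
      (z : ∀ i : Fin S.M, S.StateTraj i), S.feasAT ℓ K G g Y z Ψ →
        S.feasPS ℓ K G g Y z (fun i t ξ s => Ψ i t ξ (fun j => S.Rmap Y z j (s j))) ∧
        S.objPS ℓ K G g Y z (fun i t ξ s => Ψ i t ξ (fun j => S.Rmap Y z j (s j)))
          = S.objL Ψ (fun i => S.XAT ℓ K G g Y z i) := by
    intro Ψ Y z hfeas
    obtain ⟨hc, hpd, hcon⟩ := hfeas
    constructor
    · refine ⟨?_, hpd, ?_⟩
      · -- causality of Γ
        intro i t ξ ξ' s s' h1 h2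
        refine hc i t ξ ξ' _ _ h1 ?_
        intro j hj τ hτ
        simp only [Sys.Rmap, h2 j hj τ hτ]
      · -- robust constraints
        intro i s hs ξ hξ
        have hζ : (fun j => S.Rmap Y z j (s j)) ∈
            S.BelSet (fun i' => S.XAT ℓ K G g Y z i') i :=
          fun j hj => Rmap_mem_XAT S ℓ K G g Y z j (hs j hj)
        exact hcon i _ hζ ξ hξ
    · -- equal objectives
      refine Finset.sum_congr rfl fun i _ => ?_
      congr 1
      ext v
      constructor
      · rintro ⟨⟨ξ, s⟩, ⟨hξ, hs⟩, rfl⟩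
        exact ⟨⟨ξ, fun j => S.Rmap Y z j (s j)⟩,
          ⟨hξ, fun j hj => Rmap_mem_XAT S ℓ K G g Y z j (hs j hj)⟩, rfl⟩
      · rintro ⟨⟨ξ, ζ⟩, ⟨hξ, hζ⟩, rfl⟩
        refine ⟨⟨ξ, fun j => S.Lmap Y z j (ζ j)⟩,
          ⟨hξ, fun j hj => (mem_XAT_iff S ℓ K G g Y z hpd j (ζ j)).1 (hζ j hj)⟩, ?_⟩
        have hζeq : (fun j => S.Rmap Y z j (S.Lmap Y z j (ζ j))) = ζ :=
          funext fun j => Rmap_Lmap S Y z hpd j (ζ j)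
        have h : ∀ ζ' : S.Beliefs, ζ' = ζ →
            ((S.cost i (S.traj i ζ' (fun t => Ψ i t ξ ζ') ξ)
              (fun t => Ψ i t ξ ζ') : ℝ) : EReal)
            = ((S.cost i (S.lState Ψ i ξ ζ) (S.lInput Ψ i ξ ζ) : ℝ) : EReal) := by
          rintro ζ' rfl; rfl
        exact h _ hζeq
  -- Converse construction: from a feasible `P_S` solution to a feasible `P_AT` solution.
  have bwd : ∀ (Γ : S.LPolicy)
      (Y : ∀ i : Fin S.M, Fin (S.T+1) → Matrix (Fin (S.nx i)) (Fin (S.nx i)) ℝ)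
      (z : ∀ i : Fin S.M, S.StateTraj i), S.feasPS ℓ K G g Y z Γ →
        S.feasAT ℓ K G g Y z (fun i t ξ ζ => Γ i t ξ (fun j => S.Lmap Y z j (ζ j))) ∧
        S.objL (fun i t ξ ζ => Γ i t ξ (fun j => S.Lmap Y z j (ζ j)))
            (fun i => S.XAT ℓ K G g Y z i)
          = S.objPS ℓ K G g Y z Γ := by
    intro Γ Y z hfeas
    obtain ⟨hc, hpd, hcon⟩ := hfeas
    have key : ∀ (i : Fin S.M) (ξ : S.NoiseTraj i) (ζ : S.Beliefs),
        S.lState (fun i t ξ ζ => Γ i t ξ (fun j => S.Lmap Y z j (ζ j))) i ξ ζ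
          = S.psState Y z Γ i ξ (fun j => S.Lmap Y z j (ζ j)) := by
      intro i ξ ζ
      have hζeq : (fun j => S.Rmap Y z j (S.Lmap Y z j (ζ j))) = ζ :=
        funext fun j => Rmap_Lmap S Y z hpd j (ζ j)
      show S.traj i ζ (fun t => Γ i t ξ (fun j => S.Lmap Y z j (ζ j))) ξ
          = S.traj i (fun j => S.Rmap Y z j (S.Lmap Y z j (ζ j)))
              (fun t => Γ i t ξ (fun j => S.Lmap Y z j (ζ j))) ξ
      rw [hζeq]
    constructor
    · refine ⟨?_, hpd, ?_⟩
      · intro i t ξ ξ' ζ ζ' h1 h2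
        refine hc i t ξ ξ' _ _ h1 ?_
        intro j hj τ hτ
        simp only [Sys.Lmap, h2 j hj τ hτ]
      · intro i ζ hζ ξ hξ
        have hs : (fun j => S.Lmap Y z j (ζ j)) ∈ S.SBelSet ℓ K G g i :=
          fun j hj => (mem_XAT_iff S ℓ K G g Y z hpd j (ζ j)).1 (hζ j hj)
        obtain ⟨h1, h2⟩ := hcon i _ hs ξ hξ
        rw [key i ξ ζ]
        exact ⟨h1, h2⟩
    · refine Finset.sum_congr rfl fun i _ => ?_
      congr 1
      ext v
      constructor
      · rintro ⟨⟨ξ, ζ⟩, ⟨hξ, hζ⟩, rfl⟩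
        refine ⟨⟨ξ, fun j => S.Lmap Y z j (ζ j)⟩,
          ⟨hξ, fun j hj => (mem_XAT_iff S ℓ K G g Y z hpd j (ζ j)).1 (hζ j hj)⟩, ?_⟩
        have hζeq : (fun j => S.Rmap Y z j (S.Lmap Y z j (ζ j))) = ζ :=
          funext fun j => Rmap_Lmap S Y z hpd j (ζ j)
        have h : ∀ ζ' : S.Beliefs, ζ' = ζ →
            ((S.cost i (S.traj i ζ' (fun t => Γ i t ξ (fun j => S.Lmap Y z j (ζ j))) ξ)
              (fun t => Γ i t ξ (fun j => S.Lmap Y z j (ζ j))) : ℝ) : EReal)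
            = ((S.cost i (S.traj i ζ (fun t => Γ i t ξ (fun j => S.Lmap Y z j (ζ j))) ξ)
              (fun t => Γ i t ξ (fun j => S.Lmap Y z j (ζ j))) : ℝ) : EReal) := by
          rintro ζ' rfl; rfl
        exact h _ hζeq
      · rintro ⟨⟨ξ, s⟩, ⟨hξ, hs⟩, rfl⟩
        refine ⟨⟨ξ, fun j => S.Rmap Y z j (s j)⟩,
          ⟨hξ, fun j hj => Rmap_mem_XAT S ℓ K G g Y z j (hs j hj)⟩, ?_⟩
        have hseq : (fun j => S.Lmap Y z j (S.Rmap Y z j (s j))) = s :=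
          funext fun j => Lmap_Rmap S Y z hpd j (s j)
        have h : ∀ s' : S.Beliefs, s' = s →
            ((S.cost i (S.traj i (fun j => S.Rmap Y z j (s j)) (fun t => Γ i t ξ s') ξ)
              (fun t => Γ i t ξ s') : ℝ) : EReal)
            = ((S.cost i (S.psState Y z Γ i ξ s) (fun t => Γ i t ξ s) : ℝ) : EReal) := by
          rintro s' rfl; rfl
        exact h _ hseq
  refine ⟨fwd, ?_⟩
  have hset : {v : EReal | ∃ (Ψ : S.LPolicy)
      (Y : ∀ i : Fin S.M, Fin (S.T+1) → Matrix (Fin (S.nx i)) (Fin (S.nx i)) ℝ)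
      (z : ∀ i : Fin S.M, S.StateTraj i),
      S.feasAT ℓ K G g Y z Ψ ∧ v = S.objL Ψ (fun i => S.XAT ℓ K G g Y z i)}
    = {v : EReal | ∃ (Γ : S.LPolicy)
      (Y : ∀ i : Fin S.M, Fin (S.T+1) → Matrix (Fin (S.nx i)) (Fin (S.nx i)) ℝ)
      (z : ∀ i : Fin S.M, S.StateTraj i),
      S.feasPS ℓ K G g Y z Γ ∧ v = S.objPS ℓ K G g Y z Γ} := by
    ext v
    constructor
    · rintro ⟨Ψ, Y, z, hf, rfl⟩
      exact ⟨_, Y, z, (fwd Ψ Y z hf).1, ((fwd Ψ Y z hf).2).symm⟩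
    · rintro ⟨Γ, Y, z, hf, rfl⟩
      exact ⟨_, Y, z, (bwd Γ Y z hf).1, ((bwd Γ Y z hf).2).symm⟩
  show sInf _ = sInf _
  rw [hset]
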